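/- Let X, Y, Z be bounded subsets of ℝ and δ > 0. Then the δ-covering number of X − Z is at most a universal constant times (covering number of X − Y) · (covering number of Y − Z) / (covering number of Y), provided Y is nonempty. -/

import Mathlib

open scoped Pointwise

/-- The minimal number of closed balls of radius `δ` needed to cover `A ⊆ ℝ`. -/
noncomputable def covN (δ : ℝ) (A : Set ℝ) : ℕ :=
  sInf {n : ℕ | ∃ s : Finset ℝ, s.card = n ∧ A ⊆ ⋃ x ∈ s, Metric.closedBall x δ}

namespace RuzsaCovAux

open Finset Metric Bornology

/-- Rounding to the lattice `δℤ`. -/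
noncomputable def rnd (δ x : ℝ) : ℝ := δ * round (x / δ)

lemma rnd_lattice (δ x : ℝ) : ∃ k : ℤ, rnd δ x = δ * k := ⟨round (x / δ), rfl⟩

lemma abs_sub_rnd {δ : ℝ} (hδ : 0 < δ) (x : ℝ) : |x - rnd δ x| ≤ δ / 2 := by
  have h := abs_sub_round (x / δ)
  have hne : δ ≠ 0 := ne_of_gt hδ
  have hx : x - rnd δ x = δ * (x / δ - round (x / δ)) := by
    field_simp [rnd]
    rfl
  rw [hx, abs_mul, abs_of_pos hδ]
  nlinarith [abs_nonneg (x / δ - (round (x / δ) : ℝ))]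

lemma finite_rnd_image {δ : ℝ} (hδ : 0 < δ) {A : Set ℝ} (hA : IsBounded A) :
    ((rnd δ) '' A).Finite := by
  obtain ⟨M, hM⟩ := isBounded_iff_forall_norm_le.1 hA
  have : (fun x => round (x / δ)) '' A ⊆ ↑(Finset.Icc (-(⌈M / δ⌉ + 1)) (⌈M / δ⌉ + 1)) := by
    rintro k ⟨x, hx, rfl⟩
    have hxM : |x| ≤ M := hM x hx
    have h1 : |x / δ| ≤ M / δ := by
      rw [abs_div, abs_of_pos hδ]
      gcongr
    have h2 : |(round (x / δ) : ℝ)| ≤ M / δ + 1 / 2 := by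
      have := abs_sub_round (x / δ)
      calc |(round (x / δ) : ℝ)| ≤ |x / δ| + |x / δ - round (x / δ)| := by
            rw [abs_sub_comm]
            have := abs_sub_abs_le_abs_sub (round (x / δ) : ℝ) (x / δ)
            linarith [abs_sub_abs_le_abs_sub ((round (x / δ) : ℝ)) (x / δ)]
        _ ≤ M / δ + 1 / 2 := by linarith
    have hc : M / δ ≤ (⌈M / δ⌉ : ℝ) := Int.le_ceil _
    have habs : |(round (x / δ) : ℝ)| ≤ ((⌈M / δ⌉ + 1 : ℤ) : ℝ) := by
      push_cast; linarith
    rw [← Int.cast_abs, Int.cast_le] at habs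
    simp only [Finset.coe_Icc, Set.mem_Icc]
    exact abs_le.1 habs
  have hfin : ((fun x => round (x / δ)) '' A).Finite :=
    Set.Finite.subset (Finset.finite_toSet _) this
  have : (rnd δ) '' A = (fun k : ℤ => δ * k) '' ((fun x => round (x / δ)) '' A) := by
    rw [← Set.image_comp]; rfl
  rw [this]
  exact hfin.image _

lemma covN_le {δ : ℝ} {A : Set ℝ} (s : Finset ℝ)
    (h : A ⊆ ⋃ x ∈ s, Metric.closedBall x δ) : covN δ A ≤ s.card :=
  Nat.sInf_le ⟨s, rfl, h⟩

/-- At most 5 points of the lattice `δℤ` lie in a ball of radius `2δ`. -/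
lemma card_lattice_ball {δ : ℝ} (hδ : 0 < δ) (c : ℝ) (T : Finset ℝ)
    (hT : ∀ y ∈ T, (∃ k : ℤ, y = δ * k) ∧ |y - c| ≤ 2 * δ) : T.card ≤ 5 := by
  have hne : δ ≠ 0 := ne_of_gt hδ
  set m : ℤ := round (c / δ) with hm
  have hinj : Set.InjOn (fun y => round (y / δ)) T := by
    intro y₁ h₁ y₂ h₂ h
    obtain ⟨k₁, rfl⟩ := (hT y₁ h₁).1
    obtain ⟨k₂, rfl⟩ := (hT y₂ h₂).1
    simp only [mul_div_cancel_left₀ _ hne, round_intCast] at h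
    rw [h]
  have hsub : T.image (fun y => round (y / δ)) ⊆ Finset.Icc (m - 2) (m + 2) := by
    intro k hk
    obtain ⟨y, hy, rfl⟩ := Finset.mem_image.1 hk
    obtain ⟨⟨j, rfl⟩, hdist⟩ := hT y hy
    rw [mul_div_cancel_left₀ _ hne, round_intCast]
    have h1 : |(j : ℝ) - c / δ| ≤ 2 := by
      have : (j : ℝ) - c / δ = (δ * j - c) / δ := by field_simp
      rw [this, abs_div, abs_of_pos hδ, div_le_iff₀ hδ]
      linarith
    have h2 : |c / δ - (m : ℝ)| ≤ 1 / 2 := abs_sub_round (c / δ)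
    have h3 : |(j : ℝ) - (m : ℝ)| ≤ 5 / 2 := by
      calc |(j : ℝ) - m| ≤ |(j : ℝ) - c / δ| + |c / δ - m| := abs_sub_le _ _ _
        _ ≤ 5 / 2 := by linarith
    have h4 : |j - m| ≤ 2 := by
      have : ((|j - m| : ℤ) : ℝ) ≤ 5 / 2 := by push_cast; exact h3
      by_contra hcon
      push_neg at hcon
      have : (3 : ℝ) ≤ ((|j - m| : ℤ) : ℝ) := by exact_mod_cast hcon
      linarith
    rw [Finset.mem_Icc]
    constructor <;> linarith [abs_le.1 h4 |>.1, abs_le.1 h4 |>.2]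
  calc T.card = (T.image (fun y => round (y / δ))).card :=
        (Finset.card_image_of_injOn hinj).symm
    _ ≤ (Finset.Icc (m - 2) (m + 2)).card := Finset.card_le_card hsub
    _ = 5 := by rw [Int.card_Icc]; omega

/-- A bounded set has a finite cover, so `covN` is attained. -/
lemma covN_spec {δ : ℝ} (hδ : 0 < δ) {A : Set ℝ} (hA : IsBounded A) :
    ∃ s : Finset ℝ, s.card = covN δ A ∧ A ⊆ ⋃ x ∈ s, Metric.closedBall x δ := by
  have hne : {n : ℕ | ∃ s : Finset ℝ, s.card = n ∧
      A ⊆ ⋃ x ∈ s, Metric.closedBall x δ}.Nonempty := by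
    refine ⟨(finite_rnd_image hδ hA).toFinset.card, (finite_rnd_image hδ hA).toFinset, rfl, ?_⟩
    intro x hx
    refine Set.mem_iUnion₂.2 ⟨rnd δ x, ?_, ?_⟩
    · rw [Set.Finite.mem_toFinset]; exact ⟨x, hx, rfl⟩
    · rw [Metric.mem_closedBall, Real.dist_eq]
      linarith [abs_sub_rnd hδ x]
  exact Nat.sInf_mem hne

/-- Key lower-bound lemma: a lattice finset each of whose points is `δ`-close to `S`
has cardinality at most `5 * covN δ S`. -/
lemma card_le_five_covN {δ : ℝ} (hδ : 0 < δ) (W : Finset ℝ) {S : Set ℝ} (hS : IsBounded S)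
    (hlat : ∀ w ∈ W, ∃ k : ℤ, w = δ * k)
    (hnear : ∀ w ∈ W, ∃ p ∈ S, |w - p| ≤ δ) :
    W.card ≤ 5 * covN δ S := by
  obtain ⟨s, hscard, hscov⟩ := covN_spec hδ hS
  have hWsub : W ⊆ s.biUnion (fun c => W.filter (fun w => |w - c| ≤ 2 * δ)) := by
    intro w hw
    obtain ⟨p, hp, hwp⟩ := hnear w hw
    obtain ⟨c, hc⟩ := Set.mem_iUnion₂.1 (hscov hp)
    obtain ⟨hcs, hpc⟩ := hc
    rw [Metric.mem_closedBall, Real.dist_eq] at hpc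
    refine Finset.mem_biUnion.2 ⟨c, hcs, Finset.mem_filter.2 ⟨hw, ?_⟩⟩
    calc |w - c| ≤ |w - p| + |p - c| := abs_sub_le _ _ _
      _ ≤ 2 * δ := by linarith
  calc W.card ≤ (s.biUnion (fun c => W.filter (fun w => |w - c| ≤ 2 * δ))).card :=
        Finset.card_le_card hWsub
    _ ≤ ∑ c ∈ s, (W.filter (fun w => |w - c| ≤ 2 * δ)).card := Finset.card_biUnion_le
    _ ≤ ∑ _c ∈ s, 5 := by
        refine Finset.sum_le_sum fun c _ => ?_
        refine card_lattice_ball hδ c _ fun y hy => ?_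
        rw [Finset.mem_filter] at hy
        exact ⟨hlat y hy.1, hy.2⟩
    _ = 5 * covN δ S := by rw [Finset.sum_const, smul_eq_mul, hscard, mul_comm]

lemma card_sub_comm (A B : Finset ℝ) : (A - B).card = (B - A).card := by
  have himg : A - B = Finset.image (fun x => -x) (B - A) := by
    ext x
    simp only [Finset.mem_image, Finset.mem_sub]
    constructor
    · rintro ⟨a, ha, b, hb, rfl⟩
      exact ⟨b - a, ⟨b, hb, a, ha, rfl⟩, by ring⟩
    · rintro ⟨y, ⟨b, hb, a, ha, rfl⟩, rfl⟩
      exact ⟨a, ha, b, hb, by ring⟩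
  rw [himg, Finset.card_image_of_injective _ neg_injective]

end RuzsaCovAux

/-- Ruzsa triangle inequality for δ-covering numbers:
`|X − Z|_δ ≲ |X − Y|_δ |Y − Z|_δ / |Y|_δ` with a universal constant. -/
theorem ruzsa_triangle_covering :
    ∃ C : ℝ, 0 < C ∧ ∀ δ : ℝ, 0 < δ → ∀ X Y Z : Set ℝ,
      Bornology.IsBounded X → Bornology.IsBounded Y → Bornology.IsBounded Z →
      Y.Nonempty →
      (covN δ (X - Z) : ℝ) * covN δ Y ≤ C * covN δ (X - Y) * covN δ (Y - Z) := by
  open RuzsaCovAux Finset in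
  refine ⟨25, by norm_num, fun δ hδ X Y Z hX hY hZ _hYne => ?_⟩
  set X' : Finset ℝ := (finite_rnd_image hδ hX).toFinset with hX'
  set Y' : Finset ℝ := (finite_rnd_image hδ hY).toFinset with hY'
  set Z' : Finset ℝ := (finite_rnd_image hδ hZ).toFinset with hZ'
  have memX' : ∀ x ∈ X, rnd δ x ∈ X' := fun x hx => by
    rw [hX', Set.Finite.mem_toFinset]; exact ⟨x, hx, rfl⟩
  have memY' : ∀ y ∈ Y, rnd δ y ∈ Y' := fun y hy => by
    rw [hY', Set.Finite.mem_toFinset]; exact ⟨y, hy, rfl⟩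
  have memZ' : ∀ z ∈ Z, rnd δ z ∈ Z' := fun z hz => by
    rw [hZ', Set.Finite.mem_toFinset]; exact ⟨z, hz, rfl⟩
  -- upper bounds
  have h1 : covN δ (X - Z) ≤ (X' - Z').card := by
    refine covN_le _ ?_
    rintro p ⟨x, hx, z, hz, rfl⟩
    refine Set.mem_iUnion₂.2 ⟨rnd δ x - rnd δ z, ?_, ?_⟩
    · exact Finset.sub_mem_sub (memX' x hx) (memZ' z hz)
    · rw [Metric.mem_closedBall, Real.dist_eq]
      have hx' := abs_sub_rnd hδ x
      have hz' := abs_sub_rnd hδ z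
      calc |x - z - (rnd δ x - rnd δ z)| = |(x - rnd δ x) - (z - rnd δ z)| := by ring_nf
        _ ≤ |x - rnd δ x| + |z - rnd δ z| := abs_sub _ _
        _ ≤ δ := by linarith
  have h2 : covN δ Y ≤ Y'.card := by
    refine covN_le _ ?_
    intro y hy
    refine Set.mem_iUnion₂.2 ⟨rnd δ y, memY' y hy, ?_⟩
    rw [Metric.mem_closedBall, Real.dist_eq]
    linarith [abs_sub_rnd hδ y]
  -- lower bounds
  have h3 : (X' - Y').card ≤ 5 * covN δ (X - Y) := by
    refine card_le_five_covN hδ _ (hX.sub hY) ?_ ?_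
    · intro w hw
      obtain ⟨a, ha, b, hb, rfl⟩ := Finset.mem_sub.1 hw
      rw [hX', Set.Finite.mem_toFinset] at ha
      rw [hY', Set.Finite.mem_toFinset] at hb
      obtain ⟨x, _, rfl⟩ := ha
      obtain ⟨y, _, rfl⟩ := hb
      exact ⟨round (x / δ) - round (y / δ), by push_cast [rnd]; ring⟩
    · intro w hw
      obtain ⟨a, ha, b, hb, rfl⟩ := Finset.mem_sub.1 hw
      rw [hX', Set.Finite.mem_toFinset] at ha
      rw [hY', Set.Finite.mem_toFinset] at hb
      obtain ⟨x, hx, rfl⟩ := ha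
      obtain ⟨y, hy, rfl⟩ := hb
      refine ⟨x - y, ⟨x, hx, y, hy, rfl⟩, ?_⟩
      have hx' := abs_sub_rnd hδ x
      have hy' := abs_sub_rnd hδ y
      calc |rnd δ x - rnd δ y - (x - y)| = |(x - rnd δ x) - (y - rnd δ y)| := by
            rw [abs_sub_comm]; ring_nf
        _ ≤ |x - rnd δ x| + |y - rnd δ y| := abs_sub _ _
        _ ≤ δ := by linarith
  have h4 : (Z' - Y').card ≤ 5 * covN δ (Y - Z) := by
    rw [card_sub_comm]
    refine card_le_five_covN hδ _ (hY.sub hZ) ?_ ?_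
    · intro w hw
      obtain ⟨a, ha, b, hb, rfl⟩ := Finset.mem_sub.1 hw
      rw [hY', Set.Finite.mem_toFinset] at ha
      rw [hZ', Set.Finite.mem_toFinset] at hb
      obtain ⟨y, _, rfl⟩ := ha
      obtain ⟨z, _, rfl⟩ := hb
      exact ⟨round (y / δ) - round (z / δ), by push_cast [rnd]; ring⟩
    · intro w hw
      obtain ⟨a, ha, b, hb, rfl⟩ := Finset.mem_sub.1 hw
      rw [hY', Set.Finite.mem_toFinset] at ha
      rw [hZ', Set.Finite.mem_toFinset] at hb
      obtain ⟨y, hy, rfl⟩ := ha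
      obtain ⟨z, hz, rfl⟩ := hb
      refine ⟨y - z, ⟨y, hy, z, hz, rfl⟩, ?_⟩
      have hy' := abs_sub_rnd hδ y
      have hz' := abs_sub_rnd hδ z
      calc |rnd δ y - rnd δ z - (y - z)| = |(y - rnd δ y) - (z - rnd δ z)| := by
            rw [abs_sub_comm]; ring_nf
        _ ≤ |y - rnd δ y| + |z - rnd δ z| := abs_sub _ _
        _ ≤ δ := by linarith
  -- Ruzsa triangle inequality for finsets
  have hruzsa : (X' - Z').card * Y'.card ≤ (X' - Y').card * (Z' - Y').card :=
    Finset.ruzsa_triangle_inequality_sub_sub_sub X' Y' Z'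
  have key : covN δ (X - Z) * covN δ Y ≤ 25 * (covN δ (X - Y) * covN δ (Y - Z)) := by
    calc covN δ (X - Z) * covN δ Y ≤ (X' - Z').card * Y'.card := Nat.mul_le_mul h1 h2
      _ ≤ (X' - Y').card * (Z' - Y').card := hruzsa
      _ ≤ (5 * covN δ (X - Y)) * (5 * covN δ (Y - Z)) := Nat.mul_le_mul h3 h4
      _ = 25 * (covN δ (X - Y) * covN δ (Y - Z)) := by ring
  have := (Nat.cast_le (α := ℝ)).2 key
  push_cast at this
  linarith
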